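/- Assume A and Ω¹ are finite-dimensional over k. Let ∇̄ : T → M be a k-linear map satisfying, for all Σᵢ lᵢ⊗mᵢ ∈ T and a ∈ A: ∇̄(Σᵢ lᵢ⊗mᵢ)·a = ∇̄(Σᵢ (lᵢ·a)⊗mᵢ) + Σᵢ lᵢ(da)·mᵢ. Then ∇₀ := −∇̄∘Υ⁻¹ : Hom_A(Ω¹, M) → M is a hom-connection, i.e. ∇₀(f·a) = ∇₀(f)·a + f(da) for all right A-linear f : Ω¹ → M and a ∈ A. Together with the converse direction, the assignment ∇₀ ↦ −∇₀∘Υ is a bijective correspondence between hom-connections on M and such maps ∇̄. -/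

import Mathlib

set_option linter.unusedSectionVars false

/-!
STATEMENT 8: `A`, `Ω¹` finite-dimensional.  If a `k`-linear `∇̄ : T → M` satisfies
`∇̄(Σ lᵢ⊗mᵢ)·a = ∇̄(Σ (lᵢ·a)⊗mᵢ) + Σ lᵢ(da)·mᵢ` (a connection in the left
`C = A*`-comodule `M`), then `∇₀ := −∇̄∘Υ⁻¹` is a hom-connection, where
`Υ⁻¹(f) = Σ_t eᵗ ⊗ f(ωᵗ)` for a basis `{ωᵗ}` of `Ω¹` with dual basis `{eᵗ}`.
Together with the converse direction, `∇₀ ↦ −∇₀∘Υ` is a bijective correspondence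
between hom-connections on `M` and such maps `∇̄`.
-/

open MulOpposite TensorProduct

noncomputable section

variable {k A Ω M : Type*} [Field k] [Ring A] [Algebra k A]
  [AddCommGroup Ω] [Module k Ω] [Module A Ω] [Module Aᵐᵒᵖ Ω]
  [SMulCommClass A Aᵐᵒᵖ Ω] [SMulCommClass Aᵐᵒᵖ k Ω] [SMulCommClass A k Ω]
  [IsScalarTower k Aᵐᵒᵖ Ω]
  [AddCommGroup M] [Module k M] [Module Aᵐᵒᵖ M]
  [SMulCommClass Aᵐᵒᵖ k M] [IsScalarTower k Aᵐᵒᵖ M]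

/-- The left `A`-action on `L = Hom_k(Ω¹, k)`: `(a·l)(ω) := l(ωa)`. -/
def aL (a : A) : (Ω →ₗ[k] k) →ₗ[k] (Ω →ₗ[k] k) :=
  (DistribMulAction.toLinearMap k Ω (op a)).dualMap

/-- The right `A`-action on `L = Hom_k(Ω¹, k)`: `(l·a)(ω) := l(aω)`. -/
def raL (a : A) : (Ω →ₗ[k] k) →ₗ[k] (Ω →ₗ[k] k) :=
  (DistribMulAction.toLinearMap k Ω a).dualMap

/-- The right `A`-action on `M` as a `k`-linear endomorphism. -/
def mR (a : A) : M →ₗ[k] M := DistribMulAction.toLinearMap k M (op a)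

/-- The cotensor product `T = L □_C M ⊆ L ⊗_k M`. -/
def cotensor : Submodule k ((Ω →ₗ[k] k) ⊗[k] M) :=
  haveI : Sub ((Ω →ₗ[k] k) ⊗[k] M →ₗ[k] (Ω →ₗ[k] k) ⊗[k] M) :=
    @LinearMap.instSub k k _ _ _ _ _ TensorProduct.addCommGroup _ _ (RingHom.id k)
  ⨅ a : A, LinearMap.ker
    ((TensorProduct.map (aL (k := k) (Ω := Ω) a) (LinearMap.id : M →ₗ[k] M) -
      TensorProduct.map (LinearMap.id : (Ω →ₗ[k] k) →ₗ[k] (Ω →ₗ[k] k))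
        (mR (k := k) (M := M) a) :
      (Ω →ₗ[k] k) ⊗[k] M →ₗ[k] (Ω →ₗ[k] k) ⊗[k] M))

/-- The operation `Σ lᵢ⊗mᵢ ↦ Σ (lᵢ·a)⊗mᵢ` on `L ⊗ M`. -/
def tsm (a : A) : (Ω →ₗ[k] k) ⊗[k] M →ₗ[k] (Ω →ₗ[k] k) ⊗[k] M :=
  TensorProduct.map (raL (k := k) (Ω := Ω) a) (LinearMap.id : M →ₗ[k] M)

lemma dualTensorHom_map_aL (a : A) (t : (Ω →ₗ[k] k) ⊗[k] M) (ω : Ω) :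
    dualTensorHom k Ω M
        (TensorProduct.map (aL (k := k) (Ω := Ω) a) (LinearMap.id : M →ₗ[k] M) t) ω =
      dualTensorHom k Ω M t (op a • ω) := by
  induction t using TensorProduct.induction_on with
  | zero => simp
  | tmul l m => simp [aL, dualTensorHom_apply]; rfl
  | add x y hx hy => simp [map_add, hx, hy]

lemma dualTensorHom_map_mR (a : A) (t : (Ω →ₗ[k] k) ⊗[k] M) (ω : Ω) :
    dualTensorHom k Ω M
        (TensorProduct.map (LinearMap.id : (Ω →ₗ[k] k) →ₗ[k] (Ω →ₗ[k] k))
          (mR (k := k) (M := M) a) t) ω =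
      op a • dualTensorHom k Ω M t ω := by
  induction t using TensorProduct.induction_on with
  | zero => simp
  | tmul l m =>
      simp only [TensorProduct.map_tmul, LinearMap.id_coe, id_eq, dualTensorHom_apply, mR]
      exact smul_comm _ _ _
  | add x y hx hy => simp [map_add, hx, hy, smul_add]

/-- `Υ : T → Hom_A(Ω¹, M)`, `Υ(Σ lᵢ⊗mᵢ)(ω) = Σ lᵢ(ω)·mᵢ` (a right `A`-linear map). -/
def Upsilon (t : ↥(cotensor (k := k) (A := A) (Ω := Ω) (M := M))) : Ω →ₗ[Aᵐᵒᵖ] M where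
  toFun ω := dualTensorHom k Ω M t.1 ω
  map_add' x y := by simp
  map_smul' b ω := by
    have ht := t.2
    simp only [cotensor, Submodule.mem_iInf, LinearMap.mem_ker, LinearMap.sub_apply,
      sub_eq_zero] at ht
    have ht' : ∀ i : A,
        TensorProduct.map (aL (k := k) (Ω := Ω) i) (LinearMap.id : M →ₗ[k] M) t.1 =
          TensorProduct.map (LinearMap.id : (Ω →ₗ[k] k) →ₗ[k] (Ω →ₗ[k] k))
            (mR (k := k) (M := M) i) t.1 := fun i => sub_eq_zero.mp (ht i)
    have h := congrArg (fun s => dualTensorHom k Ω M s ω) (ht' b.unop)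
    beta_reduce at h
    rw [dualTensorHom_map_aL, dualTensorHom_map_mR, op_unop] at h
    show dualTensorHom k Ω M t.1 (b • ω) = b • dualTensorHom k Ω M t.1 ω
    exact h

/-- The right `A`-action on `Hom_A(Ω¹, M)`: `(f · a) ω := f (a • ω)`. -/
def rsmulHom (a : A) (f : Ω →ₗ[Aᵐᵒᵖ] M) : Ω →ₗ[Aᵐᵒᵖ] M where
  toFun ω := f (a • ω)
  map_add' x y := by simp [smul_add]
  map_smul' b ω := by
    haveI := SMulCommClass.symm A Aᵐᵒᵖ Ω
    show f (a • b • ω) = b • f (a • ω)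
    rw [smul_comm a b ω, map_smul]

/-- A first-order differential calculus on `A`. -/
def IsFODC (d : A →ₗ[k] Ω) : Prop :=
  ∀ a b : A, d (a * b) = a • d b + op b • d a

/-- A hom-connection. -/
def IsHomConnection (d : A →ₗ[k] Ω) (D : (Ω →ₗ[Aᵐᵒᵖ] M) → M) : Prop :=
  IsLinearMap k D ∧
    ∀ (f : Ω →ₗ[Aᵐᵒᵖ] M) (a : A), D (rsmulHom a f) = op a • D f + f (d a)

/-- A connection in the left `C = A*`-comodule `M` with respect to the coderivation
`λ = d*`, written in terms of `T`: a `k`-linear `∇̄ : T → M` with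
`∇̄(t)·a = ∇̄(t·a) + Σᵢ lᵢ(da)·mᵢ`. -/
def IsComodConn (d : A →ₗ[k] Ω)
    (Db : ↥(cotensor (k := k) (A := A) (Ω := Ω) (M := M)) →ₗ[k] M) : Prop :=
  ∀ (t t' : ↥(cotensor (k := k) (A := A) (Ω := Ω) (M := M))) (a : A),
    t'.1 = tsm (k := k) (Ω := Ω) (M := M) a t.1 →
    op a • Db t = Db t' + dualTensorHom k Ω M t.1 (d a)

section Aux

variable {ι : Type*} [Fintype ι] [DecidableEq ι]

lemma f_ksmul (f : Ω →ₗ[Aᵐᵒᵖ] M) (c : k) (ω : Ω) : f (c • ω) = c • f ω := by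
  rw [← algebraMap_smul Aᵐᵒᵖ c ω, map_smul, algebraMap_smul]

/-- `Υ⁻¹ f = Σ coordᵢ ⊗ f(bᵢ)`. -/
def tfT (b : Module.Basis ι k Ω) (f : Ω →ₗ[Aᵐᵒᵖ] M) : (Ω →ₗ[k] k) ⊗[k] M :=
  ∑ i, b.coord i ⊗ₜ[k] f (b i)

lemma dth_inj (b : Module.Basis ι k Ω) :
    Function.Injective (dualTensorHom k Ω M) := by
  intro x y h
  have hx := dualTensorHomEquivOfBasis_symm_cancel_left (N := M) b x
  rw [h, dualTensorHomEquivOfBasis_symm_cancel_left] at hx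
  exact hx.symm

lemma dualTensorHom_tfT (b : Module.Basis ι k Ω) (f : Ω →ₗ[Aᵐᵒᵖ] M) (ω : Ω) :
    dualTensorHom k Ω M (tfT b f) ω = f ω := by
  simp only [tfT, map_sum, LinearMap.coe_sum, Finset.sum_apply, dualTensorHom_apply]
  simp_rw [← f_ksmul]
  rw [← map_sum]
  congr 1
  simp_rw [Module.Basis.coord_apply]
  exact b.sum_repr ω

lemma dualTensorHom_tsm (a : A) (s : (Ω →ₗ[k] k) ⊗[k] M) (ω : Ω) :
    dualTensorHom k Ω M (tsm (k := k) (Ω := Ω) (M := M) a s) ω =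
      dualTensorHom k Ω M s (a • ω) := by
  induction s using TensorProduct.induction_on with
  | zero => simp [tsm]
  | tmul l m => simp [tsm, raL, dualTensorHom_apply]; rfl
  | add x y hx hy => simp only [tsm, map_add, LinearMap.add_apply] at *; rw [hx, hy]

lemma tfT_mem (b : Module.Basis ι k Ω) (f : Ω →ₗ[Aᵐᵒᵖ] M) :
    tfT b f ∈ cotensor (k := k) (A := A) (Ω := Ω) (M := M) := by
  simp only [cotensor, Submodule.mem_iInf, LinearMap.mem_ker, LinearMap.sub_apply, sub_eq_zero]
  intro a
  refine (sub_eq_zero (a := TensorProduct.map (aL (k := k) (Ω := Ω) a)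
    (LinearMap.id : M →ₗ[k] M) (tfT b f)) (b := TensorProduct.map
    (LinearMap.id : (Ω →ₗ[k] k) →ₗ[k] (Ω →ₗ[k] k)) (mR (k := k) (M := M) a) (tfT b f))).mpr ?_
  apply dth_inj b
  apply LinearMap.ext
  intro ω
  rw [dualTensorHom_map_aL, dualTensorHom_map_mR, dualTensorHom_tfT, dualTensorHom_tfT]
  exact f.map_smul (op a) ω

lemma tfT_rsmul (b : Module.Basis ι k Ω) (f : Ω →ₗ[Aᵐᵒᵖ] M) (a : A) :
    tfT b (rsmulHom a f) = tsm (k := k) (Ω := Ω) (M := M) a (tfT b f) := by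
  apply dth_inj b
  apply LinearMap.ext
  intro ω
  rw [dualTensorHom_tfT, dualTensorHom_tsm, dualTensorHom_tfT]
  rfl

lemma tfT_Upsilon (b : Module.Basis ι k Ω)
    (t : ↥(cotensor (k := k) (A := A) (Ω := Ω) (M := M))) :
    tfT b (Upsilon t) = t.1 := by
  apply dth_inj b
  apply LinearMap.ext
  intro ω
  rw [dualTensorHom_tfT]
  rfl

/-- `∇̄ := −∇₀∘Υ`. -/
def DbOf (D : (Ω →ₗ[Aᵐᵒᵖ] M) → M) (hD : IsLinearMap k D) :
    ↥(cotensor (k := k) (A := A) (Ω := Ω) (M := M)) →ₗ[k] M where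
  toFun t := -(D (Upsilon t))
  map_add' t t' := by
    have h : Upsilon (t + t') = Upsilon t + Upsilon t' := by
      apply LinearMap.ext; intro ω
      show dualTensorHom k Ω M (t.1 + t'.1) ω = _
      simp [Upsilon]
    show -(D (Upsilon (t + t'))) = -(D (Upsilon t)) + -(D (Upsilon t'))
    rw [h, hD.map_add, neg_add]
  map_smul' c t := by
    have h : Upsilon (c • t) = c • Upsilon t := by
      apply LinearMap.ext; intro ω
      show dualTensorHom k Ω M (c • t.1) ω = _
      simp [Upsilon]
    show -(D (Upsilon (c • t))) = (RingHom.id k) c • -(D (Upsilon t))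
    rw [h, hD.map_smul]
    simp

end Aux

/-- For finite-dimensional `A`, `Ω¹`, any comodule connection
`∇̄ : T → M` induces a hom-connection `∇₀ = −∇̄∘Υ⁻¹`; moreover `∇₀ ↦ −∇₀∘Υ` is a
bijection between hom-connections on `M` and comodule connections `T → M`. -/
theorem homConnection_from_comodule_connection
    [FiniteDimensional k A] [FiniteDimensional k Ω]
    {ι : Type*} [Fintype ι] [DecidableEq ι] (b : Module.Basis ι k Ω)
    (d : A →ₗ[k] Ω) (hd : IsFODC d)
    (Db : ↥(cotensor (k := k) (A := A) (Ω := Ω) (M := M)) →ₗ[k] M)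
    (hDb : IsComodConn d Db) :
    (∀ (f : Ω →ₗ[Aᵐᵒᵖ] M) (a : A)
        (tf tfa : ↥(cotensor (k := k) (A := A) (Ω := Ω) (M := M))),
        tf.1 = ∑ i, b.coord i ⊗ₜ[k] f (b i) →
        tfa.1 = ∑ i, b.coord i ⊗ₜ[k] (rsmulHom a f) (b i) →
        -(Db tfa) = op a • (-(Db tf)) + f (d a)) ∧
    (∃ e : {D : (Ω →ₗ[Aᵐᵒᵖ] M) → M // IsHomConnection d D} ≃
          {Db' : ↥(cotensor (k := k) (A := A) (Ω := Ω) (M := M)) →ₗ[k] M //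
            IsComodConn d Db'},
      ∀ (p : {D : (Ω →ₗ[Aᵐᵒᵖ] M) → M // IsHomConnection d D})
        (t : ↥(cotensor (k := k) (A := A) (Ω := Ω) (M := M))),
        (e p).1 t = -(p.1 (Upsilon t))) := by
  constructor
  · intro f a tf tfa htf htfa
    have h1 : tfa.1 = tsm (k := k) (Ω := Ω) (M := M) a tf.1 := by
      rw [htfa, htf]; exact tfT_rsmul b f a
    have h2 := hDb tf tfa a h1
    have h3 : dualTensorHom k Ω M tf.1 (d a) = f (d a) := by
      rw [htf]; exact dualTensorHom_tfT b f (d a)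
    rw [h3] at h2
    rw [smul_neg, h2]
    abel
  · refine ⟨{
      toFun := fun p => ⟨DbOf p.1 p.2.1, ?_⟩
      invFun := fun q => ⟨fun f => -(q.1 ⟨tfT b f, tfT_mem b f⟩), ?_, ?_⟩
      left_inv := ?_
      right_inv := ?_ }, fun p t => rfl⟩
    · -- `DbOf p.1` is a comodule connection
      intro t t' a ht'
      have hU : Upsilon t' = rsmulHom a (Upsilon t) := by
        apply LinearMap.ext; intro ω
        show dualTensorHom k Ω M t'.1 ω = dualTensorHom k Ω M t.1 (a • ω)
        rw [ht', dualTensorHom_tsm]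
      show op a • (-(p.1 (Upsilon t))) = -(p.1 (Upsilon t')) + dualTensorHom k Ω M t.1 (d a)
      rw [hU, p.2.2 (Upsilon t) a]
      have : (Upsilon t) (d a) = dualTensorHom k Ω M t.1 (d a) := rfl
      rw [this, smul_neg]
      abel
    · -- k-linearity of the induced hom-connection
      constructor
      · intro f g
        have h : (⟨tfT b (f + g), tfT_mem b (f + g)⟩ :
              ↥(cotensor (k := k) (A := A) (Ω := Ω) (M := M))) =
            ⟨tfT b f, tfT_mem b f⟩ + ⟨tfT b g, tfT_mem b g⟩ := by
          apply Subtype.ext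
          show tfT b (f + g) = tfT b f + tfT b g
          simp [tfT, tmul_add, Finset.sum_add_distrib]
        rw [h, map_add, neg_add]
      · intro c f
        have h : (⟨tfT b (c • f), tfT_mem b (c • f)⟩ :
              ↥(cotensor (k := k) (A := A) (Ω := Ω) (M := M))) =
            c • ⟨tfT b f, tfT_mem b f⟩ := by
          apply Subtype.ext
          show tfT b (c • f) = c • tfT b f
          simp [tfT, tmul_smul, Finset.smul_sum]
        rw [h, map_smul, smul_neg]
    · -- the Leibniz rule of the induced hom-connection
      intro f a
      have h1 : (⟨tfT b (rsmulHom a f), tfT_mem b (rsmulHom a f)⟩ :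
            ↥(cotensor (k := k) (A := A) (Ω := Ω) (M := M))).1 =
          tsm (k := k) (Ω := Ω) (M := M) a
            (⟨tfT b f, tfT_mem b f⟩ :
              ↥(cotensor (k := k) (A := A) (Ω := Ω) (M := M))).1 :=
        tfT_rsmul b f a
      have h2 := q.2 ⟨tfT b f, tfT_mem b f⟩ ⟨tfT b (rsmulHom a f), tfT_mem b (rsmulHom a f)⟩ a h1
      rw [show dualTensorHom k Ω M
            (⟨tfT b f, tfT_mem b f⟩ :
              ↥(cotensor (k := k) (A := A) (Ω := Ω) (M := M))).1 (d a) = f (d a) from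
          dualTensorHom_tfT b f (d a)] at h2
      rw [smul_neg, h2]
      abel
    · -- left inverse
      intro p
      apply Subtype.ext
      funext f
      show -(DbOf p.1 p.2.1 ⟨tfT b f, tfT_mem b f⟩) = p.1 f
      have h : Upsilon (⟨tfT b f, tfT_mem b f⟩ :
          ↥(cotensor (k := k) (A := A) (Ω := Ω) (M := M))) = f := by
        apply LinearMap.ext; intro ω
        exact dualTensorHom_tfT b f ω
      show -(-(p.1 (Upsilon ⟨tfT b f, tfT_mem b f⟩))) = p.1 f
      rw [h, neg_neg]
    · -- right inverse
      intro q
      apply Subtype.ext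
      apply LinearMap.ext
      intro t
      show -(-(q.1 ⟨tfT b (Upsilon t), tfT_mem b (Upsilon t)⟩)) = q.1 t
      rw [neg_neg]
      congr 1
      exact Subtype.ext (tfT_Upsilon b t)

end
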